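/- Let x ∈ [0,1] and let A, B be 2×2 Hermitian positive semidefinite complex matrices with A + B = diag(1, x) and rank A ≤ 1, rank B ≤ 1. Then there exists a 2×2 unitary matrix U = (u_{jk})_{j,k∈{0,1}} such that A = [[|u₀₀|², √x·conj(u₀₀)·u₀₁], [√x·u₀₀·conj(u₀₁), x·|u₀₁|²]] and B = [[|u₁₀|², √x·conj(u₁₀)·u₁₁], [√x·u₁₀·conj(u₁₁), x·|u₁₁|²]]. -/

import Mathlib

open Matrix ComplexOrder

private lemma psd_diag_nonneg {M : Matrix (Fin 2) (Fin 2) ℂ} (hM : M.PosSemidef) (i : Fin 2) :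
    0 ≤ M i i := by
  exact hM.diag_nonneg

private lemma det_zero_of_rank_le_one {M : Matrix (Fin 2) (Fin 2) ℂ} (h : M.rank ≤ 1) :
    M.det = 0 := by
  by_contra hd
  have := Matrix.rank_of_isUnit M ((Matrix.isUnit_iff_isUnit_det M).mpr (isUnit_iff_ne_zero.mpr hd))
  simp [Fintype.card_fin] at this
  omega

/-- **The polarimeter decomposition.** Every decomposition of `diag(1, x)` (with
`x ∈ [0,1]`) into two positive semidefinite matrices of rank at most one arises
from a unitary `U` via the measurement-operator forms `π₀, π₁` of the variational
triangular polarimeter. -/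
theorem rank_one_decomposition_of_diag
    (x : ℝ) (hx0 : 0 ≤ x) (hx1 : x ≤ 1)
    (A B : Matrix (Fin 2) (Fin 2) ℂ)
    (hA : A.PosSemidef) (hB : B.PosSemidef)
    (hAB : A + B = !![1, 0; 0, (x : ℂ)])
    (hrA : A.rank ≤ 1) (hrB : B.rank ≤ 1) :
    ∃ U : Matrix (Fin 2) (Fin 2) ℂ, U ∈ Matrix.unitaryGroup (Fin 2) ℂ ∧
      A = !![star (U 0 0) * U 0 0, (Real.sqrt x : ℂ) * star (U 0 0) * U 0 1;
             (Real.sqrt x : ℂ) * U 0 0 * star (U 0 1), (x : ℂ) * (star (U 0 1) * U 0 1)] ∧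
      B = !![star (U 1 0) * U 1 0, (Real.sqrt x : ℂ) * star (U 1 0) * U 1 1;
             (Real.sqrt x : ℂ) * U 1 0 * star (U 1 1), (x : ℂ) * (star (U 1 1) * U 1 1)] := by
  have hB00 : B 0 0 = 1 - A 0 0 := by
    have := congrFun (congrFun hAB 0) 0; simp [Matrix.add_apply] at this
    linear_combination this
  have hB01 : B 0 1 = -A 0 1 := by
    have := congrFun (congrFun hAB 0) 1; simp [Matrix.add_apply] at this
    linear_combination this
  have hB10 : B 1 0 = -A 1 0 := by
    have := congrFun (congrFun hAB 1) 0; simp [Matrix.add_apply] at this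
    linear_combination this
  have hB11 : B 1 1 = (x : ℂ) - A 1 1 := by
    have := congrFun (congrFun hAB 1) 1; simp [Matrix.add_apply] at this
    linear_combination this
  have h00 := psd_diag_nonneg hA 0
  have hB00' := psd_diag_nonneg hB 0
  set a : ℝ := (A 0 0).re with ha_def
  have haC : A 0 0 = (a : ℂ) := by
    apply Complex.ext <;> simp [ha_def]
    exact ((Complex.nonneg_iff.mp h00).2).symm
  have ha0 : 0 ≤ a := (Complex.nonneg_iff.mp h00).1
  have ha1 : a ≤ 1 := by
    rw [hB00, haC] at hB00'
    have := (Complex.nonneg_iff.mp hB00').1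
    simp at this; linarith
  have hA10 : A 1 0 = star (A 0 1) := by
    exact (hA.1.apply 1 0).symm
  have hdA : A 0 0 * A 1 1 - A 0 1 * A 1 0 = 0 := by
    rw [← Matrix.det_fin_two]; exact det_zero_of_rank_le_one hrA
  have hdB : B 0 0 * B 1 1 - B 0 1 * B 1 0 = 0 := by
    rw [← Matrix.det_fin_two]; exact det_zero_of_rank_le_one hrB
  rw [hB00, hB01, hB10, hB11, haC, hA10] at hdB
  rw [haC, hA10] at hdA
  have hD : A 1 1 = (x : ℂ) * (1 - (a : ℂ)) := by linear_combination hdA - hdB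
  have hcc : A 0 1 * star (A 0 1) = (a : ℂ) * ((x : ℂ) * (1 - (a : ℂ))) := by
    linear_combination (a : ℂ) * hD - hdA
  -- square roots
  set S : ℂ := ((Real.sqrt a : ℝ) : ℂ) with hS_def
  set R : ℂ := ((Real.sqrt x : ℝ) : ℂ) with hR_def
  set T : ℂ := ((Real.sqrt (1 - a) : ℝ) : ℂ) with hT_def
  have hS : S * S = (a : ℂ) := by
    rw [hS_def]; norm_cast; exact Real.mul_self_sqrt ha0
  have hR : R * R = (x : ℂ) := by
    rw [hR_def]; norm_cast; exact Real.mul_self_sqrt hx0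
  have hT : T * T = 1 - (a : ℂ) := by
    rw [hT_def]; norm_cast
    exact Real.mul_self_sqrt (by linarith)
  by_cases hxa : x * a = 0
  · -- degenerate case: off-diagonal vanishes
    have hax : (a : ℂ) * (x : ℂ) = 0 := by
      norm_cast; linear_combination hxa
    have hc0 : A 0 1 = 0 := by
      have h0 : A 0 1 * star (A 0 1) = 0 := by
        rw [hcc]; linear_combination ((1 : ℂ) - (a : ℂ)) * hax
      rcases mul_eq_zero.mp h0 with h | h
      · exact h
      · exact star_eq_zero.mp h
    have hc0' : star (A 0 1) = 0 := by rw [hc0]; simp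
    have hRS : R * S = 0 := by
      rw [hR_def, hS_def]
      norm_cast
      rw [← Real.sqrt_mul hx0, hxa, Real.sqrt_zero]
    refine ⟨!![S, T; -T, S], ?_, ?_, ?_⟩
    · rw [Matrix.mem_unitaryGroup_iff]
      ext i j
      fin_cases i <;> fin_cases j <;>
        simp [Matrix.mul_apply, Fin.sum_univ_two, Matrix.star_apply, hS_def, hT_def,
          Complex.star_def, Complex.conj_ofReal, Matrix.one_apply] <;>
        first
          | ring1
          | linear_combination hS + hT
          | linear_combination -(hS + hT)
    · ext i j
      fin_cases i <;> fin_cases j <;>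
        simp [hS_def, hR_def, hT_def, Complex.star_def, Complex.conj_ofReal]
      · linear_combination haC + hS.symm
      · linear_combination hc0 - T * hRS
      · linear_combination hA10 + hc0' - T * hRS
      · linear_combination hD + (x : ℂ) * hT.symm
    · ext i j
      fin_cases i <;> fin_cases j <;>
        simp [hS_def, hR_def, hT_def, Complex.star_def, Complex.conj_ofReal]
      · linear_combination hB00 - haC + hT.symm
      · linear_combination hB01 - hc0 + T * hRS
      · linear_combination hB10 - hA10 - hc0' + T * hRS
      · linear_combination hB11 - hD + (x : ℂ) * hS.symm
  · -- generic case
    obtain ⟨hx', ha'⟩ := mul_ne_zero_iff.mp hxa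
    have hxpos : 0 < x := lt_of_le_of_ne hx0 (Ne.symm hx')
    have hapos : 0 < a := lt_of_le_of_ne ha0 (Ne.symm ha')
    have hS0 : S ≠ 0 := by
      rw [hS_def]
      exact_mod_cast Complex.ofReal_ne_zero.mpr (Real.sqrt_ne_zero'.mpr hapos)
    have hR0 : R ≠ 0 := by
      rw [hR_def]
      exact_mod_cast Complex.ofReal_ne_zero.mpr (Real.sqrt_ne_zero'.mpr hxpos)
    rw [← hS, ← hR] at hcc hD
    rw [← hS] at haC
    have hSc : (starRingEnd ℂ) S = S := by rw [hS_def]; exact Complex.conj_ofReal _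
    have hRc : (starRingEnd ℂ) R = R := by rw [hR_def]; exact Complex.conj_ofReal _
    rw [Complex.star_def] at hcc hA10
    refine ⟨!![S, A 0 1 / (R * S); -(star (A 0 1)) / (R * S), S], ?_, ?_, ?_⟩
    · rw [Matrix.mem_unitaryGroup_iff]
      ext i j
      fin_cases i <;> fin_cases j <;>
        simp [Matrix.mul_apply, Fin.sum_univ_two, Matrix.star_apply,
          Complex.star_def, hSc, hRc, Matrix.one_apply, map_div₀] <;>
        first
          | ring1
          | (field_simp
             first
               | ring1
               | linear_combination hcc
               | linear_combination -hcc
               | linear_combination (R * S) * hcc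
               | linear_combination -((R * S) * hcc))
    · ext i j
      fin_cases i <;> fin_cases j <;>
        simp [Complex.star_def, hSc, hRc, map_div₀]
      · linear_combination haC
      · field_simp
      · rw [hA10]; field_simp
      · rw [hD, ← hR]; field_simp
        linear_combination -hcc
    · ext i j
      fin_cases i <;> fin_cases j <;>
        simp [Complex.star_def, hSc, hRc, map_div₀]
      · rw [hB00, haC]; field_simp
        linear_combination -hcc
      · rw [hB01]; field_simp; try ring1
      · rw [hB10, hA10]; field_simp; try ring1
      · rw [hB11, hD, ← hR]; ring
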